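/- Let α ∈ (0,1), p ∈ [1, n/α), q ∈ [1,∞), let μ be a nonnegative outer measure on ℝⁿ, and let φ : ℝⁿ → ℝⁿ be a Borel map. Then the following are equivalent: (1) there is a constant c > 0 such that ‖f∘φ‖_{L^{q,∞}_μ} ≤ c ‖f‖_{Λ̇_α^{p,∞}} for every f ∈ Λ_α^{p,∞} ∩ C(ℝⁿ); (2) there is a constant c > 0 such that μ(φ^{−1}(E)) ≤ c ( C_{α,p,∞}(E) )^{q/p} for every Borel set E ⊆ ℝⁿ. -/

import Mathlib

open MeasureTheory ENNReal

noncomputable def besovSeminorm (n : ℕ) (α p : ℝ)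
    (f : EuclideanSpace ℝ (Fin n) → ℝ) : ℝ≥0∞ :=
  ⨆ (h : EuclideanSpace ℝ (Fin n)) (_ : h ≠ 0),
    ENNReal.ofReal (‖h‖ ^ (-α)) *
      eLpNorm (fun x => f (x + h) - f x) (ENNReal.ofReal p) volume

def besovAdmissible (n : ℕ) (α p : ℝ) (E : Set (EuclideanSpace ℝ (Fin n)))
    (f : EuclideanSpace ℝ (Fin n) → ℝ) : Prop :=
  MemLp f (ENNReal.ofReal p) volume ∧ besovSeminorm n α p f < ⊤ ∧ Continuous f ∧
    ∃ N : Set (EuclideanSpace ℝ (Fin n)), IsOpen N ∧ E ⊆ N ∧ ∀ x ∈ N, 1 ≤ f x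

noncomputable def besovCapacity (n : ℕ) (α p : ℝ)
    (E : Set (EuclideanSpace ℝ (Fin n))) : ℝ≥0∞ :=
  ⨅ (f : EuclideanSpace ℝ (Fin n) → ℝ) (_ : besovAdmissible n α p E f),
    besovSeminorm n α p f ^ p

noncomputable def besovPerimeter (n : ℕ) (α p : ℝ)
    (E : Set (EuclideanSpace ℝ (Fin n))) : ℝ≥0∞ :=
  besovSeminorm n α p (E.indicator fun _ => (1 : ℝ))

/-- The Besov seminorm of `t⁻¹ * |f|` is at most `t⁻¹` times that of `f`. -/
lemma besovSeminorm_inv_abs_le (n : ℕ) (α p : ℝ) (f : EuclideanSpace ℝ (Fin n) → ℝ)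
    (t : ℝ) (ht : 0 < t) :
    besovSeminorm n α p (fun y => t⁻¹ * |f y|) ≤
      ENNReal.ofReal t⁻¹ * besovSeminorm n α p f := by
  unfold besovSeminorm
  refine iSup₂_le fun h hh => ?_
  have h1 : eLpNorm (fun x => t⁻¹ * |f (x + h)| - t⁻¹ * |f x|) (ENNReal.ofReal p) volume ≤
      ENNReal.ofReal t⁻¹ * eLpNorm (fun x => f (x + h) - f x) (ENNReal.ofReal p) volume := by
    have h2 : eLpNorm (fun x => t⁻¹ * |f (x + h)| - t⁻¹ * |f x|) (ENNReal.ofReal p) volume ≤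
        eLpNorm (fun x => t⁻¹ * (f (x + h) - f x)) (ENNReal.ofReal p) volume := by
      refine eLpNorm_mono fun x => ?_
      simp only [Real.norm_eq_abs]
      rw [← mul_sub, abs_mul, abs_mul, abs_inv, abs_of_pos ht]
      exact mul_le_mul_of_nonneg_left (abs_abs_sub_abs_le_abs_sub _ _) (by positivity)
    refine h2.trans_eq ?_
    have h3 := eLpNorm_const_smul (c := t⁻¹)
      (f := fun x => f (x + h) - f x) (ENNReal.ofReal p) volume
    rw [show (fun x => t⁻¹ * (f (x + h) - f x)) =
        t⁻¹ • (fun x => f (x + h) - f x) from rfl, h3]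
    congr 1
    rw [← ofReal_norm, Real.norm_eq_abs, abs_inv, abs_of_pos ht]
  calc ENNReal.ofReal (‖h‖ ^ (-α)) *
        eLpNorm (fun x => t⁻¹ * |f (x + h)| - t⁻¹ * |f x|) (ENNReal.ofReal p) volume
      ≤ ENNReal.ofReal (‖h‖ ^ (-α)) *
        (ENNReal.ofReal t⁻¹ * eLpNorm (fun x => f (x + h) - f x) (ENNReal.ofReal p) volume) := by
        gcongr
    _ = ENNReal.ofReal t⁻¹ * (ENNReal.ofReal (‖h‖ ^ (-α)) *
        eLpNorm (fun x => f (x + h) - f x) (ENNReal.ofReal p) volume) := by ring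
    _ ≤ ENNReal.ofReal t⁻¹ * ⨆ (h' : EuclideanSpace ℝ (Fin n)) (_ : h' ≠ 0),
        ENNReal.ofReal (‖h'‖ ^ (-α)) *
          eLpNorm (fun x => f (x + h') - f x) (ENNReal.ofReal p) volume := by
        gcongr
        exact le_iSup₂ (f := fun (h' : EuclideanSpace ℝ (Fin n)) (_ : h' ≠ 0) =>
          ENNReal.ofReal (‖h'‖ ^ (-α)) *
            eLpNorm (fun x => f (x + h') - f x) (ENNReal.ofReal p) volume) h hh

theorem besov_composition_trace_iff_capacity_bound (n : ℕ) (α p q : ℝ)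
    (hα : α ∈ Set.Ioo (0 : ℝ) 1) (hp : 1 ≤ p) (hpn : p < (n : ℝ) / α) (hq : 1 ≤ q)
    (μ : MeasureTheory.OuterMeasure (EuclideanSpace ℝ (Fin n)))
    (φ : EuclideanSpace ℝ (Fin n) → EuclideanSpace ℝ (Fin n)) (hφ : Measurable φ) :
    (∃ c : ℝ, 0 < c ∧ ∀ f : EuclideanSpace ℝ (Fin n) → ℝ,
        MemLp f (ENNReal.ofReal p) volume → besovSeminorm n α p f < ⊤ → Continuous f →
        (⨆ (t : ℝ) (_ : 0 < t), (ENNReal.ofReal t ^ q * μ {x | t < |f (φ x)|}) ^ (1 / q)) ≤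
          ENNReal.ofReal c * besovSeminorm n α p f) ↔
    (∃ c : ℝ, 0 < c ∧ ∀ E : Set (EuclideanSpace ℝ (Fin n)), MeasurableSet E →
        μ (φ ⁻¹' E) ≤ ENNReal.ofReal c * besovCapacity n α p E ^ (q / p)) := by
  have hp0 : (0 : ℝ) < p := lt_of_lt_of_le one_pos hp
  have hq0 : (0 : ℝ) < q := lt_of_lt_of_le one_pos hq
  constructor
  · rintro ⟨c, hc, hbound⟩
    refine ⟨(2 * c) ^ q, by positivity, fun E _hE => ?_⟩
    set K : ℝ≥0∞ := ENNReal.ofReal ((2 * c) ^ q) with hK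
    have hK0 : K ≠ 0 := by
      simp only [hK, ne_eq, ENNReal.ofReal_eq_zero, not_le]
      positivity
    have hKt : K ≠ ⊤ := ofReal_ne_top
    have hKeq : K = ENNReal.ofReal 2 ^ q * ENNReal.ofReal c ^ q := by
      rw [hK, ← ENNReal.ofReal_rpow_of_pos (by positivity), ENNReal.ofReal_mul (by norm_num),
        ENNReal.mul_rpow_of_nonneg _ _ hq0.le]
    -- key pointwise bound over admissible functions
    have key : ∀ f : EuclideanSpace ℝ (Fin n) → ℝ, besovAdmissible n α p E f →
        μ (φ ⁻¹' E) ≤ K * besovSeminorm n α p f ^ q := by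
      rintro f ⟨hmem, hfin, hcont, N, hNopen, hEN, hN1⟩
      set S := besovSeminorm n α p f with hS
      have hsub : φ ⁻¹' E ⊆ {x | (2⁻¹ : ℝ) < |f (φ x)|} := by
        intro x hx
        have h1 : 1 ≤ f (φ x) := hN1 _ (hEN hx)
        have h2 : 1 ≤ |f (φ x)| := h1.trans (le_abs_self _)
        simp only [Set.mem_setOf_eq]; linarith
      have hterm : (ENNReal.ofReal (2⁻¹ : ℝ) ^ q * μ {x | (2⁻¹ : ℝ) < |f (φ x)|}) ^ (1 / q) ≤
          ENNReal.ofReal c * S := by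
        refine le_trans ?_ (hbound f hmem hfin hcont)
        exact le_iSup₂ (f := fun (t : ℝ) (_ : 0 < t) =>
          (ENNReal.ofReal t ^ q * μ {x | t < |f (φ x)|}) ^ (1 / q)) (2⁻¹ : ℝ) (by norm_num)
      have h2 : ENNReal.ofReal (2⁻¹ : ℝ) ^ q * μ {x | (2⁻¹ : ℝ) < |f (φ x)|} ≤
          (ENNReal.ofReal c * S) ^ q := by
        have hB : (((ENNReal.ofReal c * S) ^ q) ^ (1 / q)) = ENNReal.ofReal c * S := by
          rw [← ENNReal.rpow_mul, mul_one_div, div_self hq0.ne', ENNReal.rpow_one]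
        rw [← ENNReal.rpow_le_rpow_iff (show (0:ℝ) < 1 / q by positivity), hB]
        exact hterm
      have h3 : μ (φ ⁻¹' E) ≤ (ENNReal.ofReal (2⁻¹ : ℝ) ^ q * μ {x | (2⁻¹ : ℝ) < |f (φ x)|}) *
          ENNReal.ofReal 2 ^ q := by
        rw [mul_comm (ENNReal.ofReal (2⁻¹ : ℝ) ^ q) _, mul_assoc,
          ← ENNReal.mul_rpow_of_nonneg _ _ hq0.le, ← ENNReal.ofReal_mul (by norm_num)]
        rw [show (2⁻¹ : ℝ) * 2 = 1 by norm_num, ENNReal.ofReal_one, ENNReal.one_rpow, mul_one]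
        exact μ.mono hsub
      calc μ (φ ⁻¹' E) ≤ (ENNReal.ofReal c * S) ^ q * ENNReal.ofReal 2 ^ q :=
            h3.trans (by gcongr)
        _ = K * S ^ q := by
            rw [hKeq, ENNReal.mul_rpow_of_nonneg _ _ hq0.le]; ring
    have h1 : (μ (φ ⁻¹' E) / K) ^ (p / q) ≤ besovCapacity n α p E := by
      refine le_iInf₂ fun f hf => ?_
      have hdiv : μ (φ ⁻¹' E) / K ≤ besovSeminorm n α p f ^ q :=
        (ENNReal.div_le_iff_le_mul (Or.inl hK0) (Or.inl hKt)).2 (by rw [mul_comm]; exact key f hf)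
      calc (μ (φ ⁻¹' E) / K) ^ (p / q) ≤ (besovSeminorm n α p f ^ q) ^ (p / q) :=
            ENNReal.rpow_le_rpow hdiv (by positivity)
        _ = besovSeminorm n α p f ^ p := by
            rw [← ENNReal.rpow_mul]; congr 1; field_simp
    have h2 : μ (φ ⁻¹' E) / K ≤ besovCapacity n α p E ^ (q / p) := by
      calc μ (φ ⁻¹' E) / K = ((μ (φ ⁻¹' E) / K) ^ (p / q)) ^ (q / p) := by
            rw [← ENNReal.rpow_mul, show p / q * (q / p) = 1 by field_simp, ENNReal.rpow_one]
        _ ≤ besovCapacity n α p E ^ (q / p) := ENNReal.rpow_le_rpow h1 (by positivity)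
      
    have := (ENNReal.div_le_iff_le_mul (Or.inl hK0) (Or.inl hKt)).1 h2
    rwa [mul_comm] at this
  · rintro ⟨c, hc, hbound⟩
    refine ⟨c ^ (1 / q), by positivity, fun f hmem hfin hcont => ?_⟩
    set S := besovSeminorm n α p f with hS
    refine iSup₂_le fun t ht => ?_
    set Et : Set (EuclideanSpace ℝ (Fin n)) := {y | t < |f y|} with hEt
    have hEtopen : IsOpen Et := isOpen_lt continuous_const (continuous_abs.comp hcont)
    set g : EuclideanSpace ℝ (Fin n) → ℝ := fun y => t⁻¹ * |f y| with hg
    have hgsem : besovSeminorm n α p g ≤ ENNReal.ofReal t⁻¹ * S :=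
      besovSeminorm_inv_abs_le n α p f t ht
    have hgadm : besovAdmissible n α p Et g := by
      refine ⟨hmem.abs.const_mul t⁻¹, ?_, continuous_const.mul (continuous_abs.comp hcont),
        Et, hEtopen, subset_rfl, ?_⟩
      · exact lt_of_le_of_lt hgsem (ENNReal.mul_lt_top ofReal_lt_top hfin)
      · intro x hx
        have hxf : t ≤ |f x| := le_of_lt hx
        calc (1:ℝ) = t⁻¹ * t := (inv_mul_cancel₀ ht.ne').symm
          _ ≤ t⁻¹ * |f x| := by gcongr
    have hcap : besovCapacity n α p Et ≤ (ENNReal.ofReal t⁻¹ * S) ^ p := by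
      refine le_trans (iInf₂_le g hgadm) ?_
      exact ENNReal.rpow_le_rpow hgsem hp0.le
    have hμ : μ {x | t < |f (φ x)|} ≤
        ENNReal.ofReal c * ((ENNReal.ofReal t⁻¹ * S) ^ p) ^ (q / p) := by
      have hpre : {x | t < |f (φ x)|} = φ ⁻¹' Et := rfl
      rw [hpre]
      refine (hbound Et hEtopen.measurableSet).trans ?_
      gcongr
    have hexp : ((ENNReal.ofReal t⁻¹ * S) ^ p) ^ (q / p) =
        ENNReal.ofReal t⁻¹ ^ q * S ^ q := by
      rw [← ENNReal.rpow_mul, show p * (q / p) = q by field_simp,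
        ENNReal.mul_rpow_of_nonneg _ _ hq0.le]
    have hmain : ENNReal.ofReal t ^ q * μ {x | t < |f (φ x)|} ≤ ENNReal.ofReal c * S ^ q := by
      calc ENNReal.ofReal t ^ q * μ {x | t < |f (φ x)|}
          ≤ ENNReal.ofReal t ^ q * (ENNReal.ofReal c * (ENNReal.ofReal t⁻¹ ^ q * S ^ q)) := by
            rw [← hexp]; gcongr
        _ = ENNReal.ofReal c * ((ENNReal.ofReal t ^ q * ENNReal.ofReal t⁻¹ ^ q) * S ^ q) := by
            ring
        _ = ENNReal.ofReal c * S ^ q := by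
            rw [← ENNReal.mul_rpow_of_nonneg _ _ hq0.le, ← ENNReal.ofReal_mul ht.le,
              mul_inv_cancel₀ ht.ne', ENNReal.ofReal_one, ENNReal.one_rpow, one_mul]
    calc (ENNReal.ofReal t ^ q * μ {x | t < |f (φ x)|}) ^ (1 / q)
        ≤ (ENNReal.ofReal c * S ^ q) ^ (1 / q) := ENNReal.rpow_le_rpow hmain (by positivity)
      _ = ENNReal.ofReal (c ^ (1 / q)) * S := by
          rw [ENNReal.mul_rpow_of_nonneg _ _ (by positivity : (0:ℝ) ≤ 1 / q),
            ← ENNReal.rpow_mul, mul_one_div, div_self hq0.ne', ENNReal.rpow_one,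
            ENNReal.ofReal_rpow_of_pos hc]
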